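/- Let b ∈ (0, 1/4) and let P0, P1 be the probability measures on {0,1}^k whose coordinates are i.i.d. Bernoulli(1/2 - b) and Bernoulli(1/2 + b) respectively. For any string s ∈ {0,1}^k with q1 ones and q0 = k - q1 zeros, |P0({s}) - P1({s})| ≤ 8·b·|q1 - q0|·(P0({s}) + P1({s}))/2. -/
import Mathlib

lemma stmt_5_aux (b : ℝ) (hb0 : 0 < b) (hb : b < 1/4) (d : ℕ) :
    (1/2 + b)^d - (1/2 - b)^d ≤ 4*b*d*((1/2+b)^d + (1/2-b)^d) := by
  have hp : (0:ℝ) < 1/2 + b := by linarith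
  have hq : (0:ℝ) ≤ 1/2 - b := by linarith
  have h1 : (1 - 4*b) ≤ (1/2-b)/(1/2+b) := by
    rw [le_div_iff₀ hp]; nlinarith
  have h1' : (0:ℝ) ≤ 1 - 4*b := by linarith
  have h2 : (1 - 4*b)^d ≤ ((1/2-b)/(1/2+b))^d := pow_le_pow_left₀ h1' h1 d
  have h3 : 1 + (d:ℝ) * (-(4*b)) ≤ (1 + (-(4*b)))^d := one_add_mul_le_pow (by linarith) d
  have h4 : 1 - 4*b*d ≤ ((1/2-b)/(1/2+b))^d := by
    calc 1 - 4*b*d = 1 + (d:ℝ) * (-(4*b)) := by ring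
    _ ≤ (1 + (-(4*b)))^d := h3
    _ = (1-4*b)^d := by ring_nf
    _ ≤ _ := h2
  have hpd : (0:ℝ) < (1/2+b)^d := pow_pos hp d
  rw [div_pow, le_div_iff₀ hpd] at h4
  nlinarith [pow_nonneg hq d, mul_nonneg (mul_nonneg (by positivity : (0:ℝ) ≤ 4*b*d) (pow_nonneg hq d)) (le_of_lt hpd)]

lemma stmt_5_aux2 (b : ℝ) (hb0 : 0 < b) (hb : b < 1/4) (a d : ℕ) :
    |(1/2 + b) ^ a * (1/2 - b) ^ (a+d) - (1/2 - b) ^ a * (1/2 + b) ^ (a+d)|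
      ≤ 8 * b * d *
        (((1/2 + b) ^ a * (1/2 - b) ^ (a+d) + (1/2 - b) ^ a * (1/2 + b) ^ (a+d)) / 2) := by
  have hp : (0:ℝ) < 1/2 + b := by linarith
  have hq : (0:ℝ) ≤ 1/2 - b := by linarith
  have key := stmt_5_aux b hb0 hb d
  have hqd : (1/2 - b:ℝ)^d ≤ (1/2+b)^d := pow_le_pow_left₀ hq (by linarith) d
  have hfac : (0:ℝ) ≤ ((1/2+b)*(1/2-b))^a := pow_nonneg (by nlinarith) a
  have e1 : (1/2 + b:ℝ) ^ a * (1/2 - b) ^ (a+d) = ((1/2+b)*(1/2-b))^a * (1/2-b)^d := by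
    rw [pow_add, mul_pow]; ring
  have e2 : (1/2 - b:ℝ) ^ a * (1/2 + b) ^ (a+d) = ((1/2+b)*(1/2-b))^a * (1/2+b)^d := by
    rw [pow_add, mul_pow]; ring
  rw [e1, e2, abs_of_nonpos (by nlinarith)]
  nlinarith [mul_le_mul_of_nonneg_left key hfac]

/-- Probability of a string with `q0` zeros and `q1` ones under i.i.d. Bernoulli(1/2 - b)
(where a `1` has probability 1/2 - b). -/
theorem stmt_5 (b : ℝ) (hb0 : 0 < b) (hb : b < 1/4) (k q0 q1 : ℕ) (hk : q0 + q1 = k) :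
    |(1/2 + b) ^ q0 * (1/2 - b) ^ q1 - (1/2 - b) ^ q0 * (1/2 + b) ^ q1|
      ≤ 8 * b * |(q1 : ℝ) - (q0 : ℝ)| *
        (((1/2 + b) ^ q0 * (1/2 - b) ^ q1 + (1/2 - b) ^ q0 * (1/2 + b) ^ q1) / 2) := by
  rcases le_total q0 q1 with h | h
  · obtain ⟨d, rfl⟩ := Nat.exists_eq_add_of_le h
    have h2 := stmt_5_aux2 b hb0 hb q0 d
    have habs : |((q0 + d : ℕ):ℝ) - (q0:ℝ)| = (d:ℝ) := by
      push_cast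
      rw [add_sub_cancel_left, abs_of_nonneg (Nat.cast_nonneg d)]
    rw [habs]; exact h2
  · obtain ⟨d, rfl⟩ := Nat.exists_eq_add_of_le h
    have h2 := stmt_5_aux2 b hb0 hb q1 d
    have habs : |(q1:ℝ) - ((q1 + d : ℕ):ℝ)| = (d:ℝ) := by
      rw [abs_sub_comm]
      push_cast
      rw [add_sub_cancel_left, abs_of_nonneg (Nat.cast_nonneg d)]
    have eA : (1/2+b:ℝ)^(q1+d) * (1/2-b)^q1 - (1/2-b)^(q1+d) * (1/2+b)^q1
        = -((1/2+b)^q1 * (1/2-b)^(q1+d) - (1/2-b)^q1 * (1/2+b)^(q1+d)) := by ring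
    rw [habs, eA, abs_neg]
    calc _ ≤ _ := h2
    _ = _ := by ring
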